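/- Let F be a field, let d ≥ 2 be an integer, and assume that if F is finite then d ≤ |F| + 1. Let Q ∈ F[X₁,…,X_d] be a rich nonzero quadratic form. Then there exists a Q-generic subset C₀ ⊆ F^d whose cardinality satisfies |C₀| + d = |F| + 1 as cardinals; in particular, if F is finite then |C₀| = |F| + 1 − d, and if F is infinite then C₀ is equinumerous with F. -/

import Mathlib

set_option linter.unusedSectionVars false
set_option maxHeartbeats 1000000

open Polynomial

section Helpers

variable {σ : Type*} [Fintype σ] [DecidableEq σ]
variable {F : Type*} [CommRing F]

lemma finsupp_sum_eq_one {m : σ →₀ ℕ} (h : (m.sum fun _ e => e) = 1) :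
    ∃ k, m = Finsupp.single k 1 := by
  have hc : Multiset.card m.toMultiset = 1 := by
    rw [Finsupp.card_toMultiset]; exact h
  obtain ⟨k, hk⟩ := Multiset.card_eq_one.mp hc
  have := congrArg Multiset.toFinsupp hk
  rw [Finsupp.toMultiset_toFinsupp] at this
  exact ⟨k, by rw [this, Multiset.toFinsupp_singleton]⟩

lemma finsupp_sum_eq_zero {m : σ →₀ ℕ} (h : (m.sum fun _ e => e) = 0) : m = 0 := by
  have hc : Multiset.card m.toMultiset = 0 := by
    rw [Finsupp.card_toMultiset]; exact h
  have := congrArg Multiset.toFinsupp (Multiset.card_eq_zero.mp hc)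
  rw [Finsupp.toMultiset_toFinsupp] at this
  simpa using this

lemma finsupp_sum_eq_two {m : σ →₀ ℕ} (h : (m.sum fun _ e => e) = 2) :
    ∃ k l, m = Finsupp.single k 1 + Finsupp.single l 1 := by
  have hc : Multiset.card m.toMultiset = 2 := by
    rw [Finsupp.card_toMultiset]; exact h
  obtain ⟨k, l, hkl⟩ := Multiset.card_eq_two.mp hc
  refine ⟨k, l, ?_⟩
  have := congrArg Multiset.toFinsupp hkl
  rw [Finsupp.toMultiset_toFinsupp] at this
  rw [this, show ({k, l} : Multiset σ) = {k} + {l} by rfl,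
    Multiset.toFinsupp_add, Multiset.toFinsupp_singleton, Multiset.toFinsupp_singleton]

lemma prod_pow_single (P : σ → F) (k : σ) :
    ∏ j, P j ^ (Finsupp.single k 1) j = P k := by
  rw [Finset.prod_eq_single k]
  · simp
  · intro j _ hj; simp [Finsupp.single_apply, Ne.symm hj]
  · simp

lemma prod_pow_two_finsupp (P : σ → F) (k l : σ) :
    ∏ j, P j ^ ((Finsupp.single k 1 + Finsupp.single l 1 : σ →₀ ℕ) j) = P k * P l := by
  simp_rw [Finsupp.add_apply, pow_add, Finset.prod_mul_distrib]
  rw [prod_pow_single, prod_pow_single]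

lemma eval_monomial_fintype (x : σ → F) (m : σ →₀ ℕ) (c : F) :
    MvPolynomial.eval x (MvPolynomial.monomial m c) = c * ∏ k, x k ^ m k := by
  rw [MvPolynomial.eval_monomial]
  congr 1
  exact Finsupp.prod_fintype _ _ (fun i => pow_zero _)

lemma aeval_monomial_poly (N : σ → Polynomial F) (m : σ →₀ ℕ) (c : F) :
    MvPolynomial.aeval N (MvPolynomial.monomial m c) = Polynomial.C c * ∏ k, N k ^ m k := by
  rw [MvPolynomial.aeval_monomial]
  congr 1
  exact Finsupp.prod_fintype _ _ (fun i => pow_zero _)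

lemma isHomogeneous_sum_eq {Q : MvPolynomial σ F} {n : ℕ} (hQ : Q.IsHomogeneous n)
    {m : σ →₀ ℕ} (hm : m ∈ Q.support) : (m.sum fun _ e => e) = n := by
  have h := hQ (MvPolynomial.mem_support_iff.mp hm)
  erw [← Finsupp.degree_eq_weight_one] at h
  simpa [Finsupp.degree_apply, Finsupp.sum] using h

/-- Top coefficient of the substitution of polynomials of degree ≤ n into a
homogeneous degree-2 multivariate polynomial. -/
lemma coeff_top_aeval {n : ℕ} (N : σ → Polynomial F) (hN : ∀ k, (N k).natDegree ≤ n)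
    {Q : MvPolynomial σ F} (hQ : Q.IsHomogeneous 2) :
    (MvPolynomial.aeval N Q).coeff (2 * n) = MvPolynomial.eval (fun k => (N k).coeff n) Q := by
  conv_lhs => rw [Q.as_sum]
  rw [map_sum, Polynomial.finset_sum_coeff]
  conv_rhs => rw [Q.as_sum]
  rw [map_sum]
  apply Finset.sum_congr rfl
  intro m hm
  obtain ⟨k, l, rfl⟩ := finsupp_sum_eq_two (isHomogeneous_sum_eq hQ hm)
  rw [aeval_monomial_poly, eval_monomial_fintype, prod_pow_two_finsupp, prod_pow_two_finsupp,
    Polynomial.coeff_C_mul, show 2 * n = n + n by ring,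
    Polynomial.coeff_mul_add_eq_of_natDegree_le (hN k) (hN l)]

lemma natDegree_aeval_le {n : ℕ} (N : σ → Polynomial F) (hN : ∀ k, (N k).natDegree ≤ n)
    {Q : MvPolynomial σ F} (hQ : Q.IsHomogeneous 2) :
    (MvPolynomial.aeval N Q).natDegree ≤ 2 * n := by
  conv_lhs => rw [Q.as_sum]
  rw [map_sum]
  apply Polynomial.natDegree_sum_le_of_forall_le
  intro m hm
  obtain ⟨k, l, rfl⟩ := finsupp_sum_eq_two (isHomogeneous_sum_eq hQ hm)
  rw [aeval_monomial_poly, prod_pow_two_finsupp]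
  calc (Polynomial.C (MvPolynomial.coeff _ _) * (N k * N l)).natDegree
      ≤ (Polynomial.C (MvPolynomial.coeff _ _)).natDegree + (N k * N l).natDegree :=
        Polynomial.natDegree_mul_le
    _ ≤ 0 + ((N k).natDegree + (N l).natDegree) := by
        gcongr
        · simp
        · exact Polynomial.natDegree_mul_le
    _ ≤ 2 * n := by have := hN k; have := hN l; omega

lemma eval_smul_two {Q : MvPolynomial σ F} (hQ : Q.IsHomogeneous 2) (c : F) (x : σ → F) :
    MvPolynomial.eval (fun k => c * x k) Q = c ^ 2 * MvPolynomial.eval x Q := by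
  conv_lhs => rw [Q.as_sum]
  conv_rhs => rw [Q.as_sum]
  rw [map_sum, map_sum, Finset.mul_sum]
  apply Finset.sum_congr rfl
  intro m hm
  obtain ⟨k, l, rfl⟩ := finsupp_sum_eq_two (isHomogeneous_sum_eq hQ hm)
  rw [eval_monomial_fintype, eval_monomial_fintype, prod_pow_two_finsupp, prod_pow_two_finsupp]
  ring

/-- Evaluation of a polynomial of total degree ≤ 1. -/
lemma eval_totalDegree_le_one {f : MvPolynomial σ F} (hf : f.totalDegree ≤ 1) (x : σ → F) :
    MvPolynomial.eval x f =
      MvPolynomial.coeff 0 f + ∑ k, MvPolynomial.coeff (Finsupp.single k 1) f * x k := by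
  classical
  conv_lhs => rw [f.as_sum]
  rw [map_sum]
  have hsub : f.support ⊆ insert (0 : σ →₀ ℕ) (Finset.univ.image fun k => Finsupp.single k 1) := by
    intro m hm
    have hle : (m.sum fun _ e => e) ≤ 1 := by
      refine le_trans ?_ hf
      simpa [Finsupp.sum] using MvPolynomial.le_totalDegree hm
    interval_cases h : (m.sum fun _ e => e)
    · simp [finsupp_sum_eq_zero h]
    · obtain ⟨k, rfl⟩ := finsupp_sum_eq_one h
      exact Finset.mem_insert_of_mem (Finset.mem_image.mpr ⟨k, Finset.mem_univ _, rfl⟩)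
  rw [Finset.sum_subset hsub (by
    intro m _ hm
    rw [MvPolynomial.notMem_support_iff.mp hm]
    simp)]
  rw [Finset.sum_insert (by
    simp only [Finset.mem_image, not_exists]
    exact fun k h => one_ne_zero (Finsupp.single_eq_zero.mp h.2))]
  rw [Finset.sum_image (fun k _ l _ h => Finsupp.single_left_injective one_ne_zero h)]
  simp [MvPolynomial.eval_monomial, Finsupp.prod_single_index]

lemma exists_single_coeff_ne_zero {f : MvPolynomial σ F} (hf : f.totalDegree = 1) :
    ∃ k, MvPolynomial.coeff (Finsupp.single k 1) f ≠ 0 := by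
  have hne : f.support.Nonempty := by
    rw [MvPolynomial.support_nonempty]
    intro h0
    rw [h0] at hf
    simp at hf
  obtain ⟨m, hm, hmax⟩ := Finset.exists_mem_eq_sup f.support hne
      (fun m => m.sum fun _ e => e)
  have hs : (m.sum fun _ e => e) = 1 := by
    rw [← hf, MvPolynomial.totalDegree, hmax]
  obtain ⟨k, rfl⟩ := finsupp_sum_eq_one hs
  exact ⟨k, MvPolynomial.mem_support_iff.mp hm⟩

lemma polyeval_aeval (N : σ → Polynomial F) (g : MvPolynomial σ F) (t : F) :
    (MvPolynomial.aeval N g).eval t = MvPolynomial.eval (fun k => (N k).eval t) g := by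
  induction g using MvPolynomial.induction_on with
  | C c => simp
  | add f g hf hg => simp [hf, hg]
  | mul_X f k hf => simp [hf]

end Helpers

section RootCount

variable {F : Type*} [Field F] [DecidableEq F]

lemma encard_root_set_le {p : Polynomial F} (hp : p ≠ 0) {m : ℕ}
    (hdeg : p.natDegree ≤ m) {S : Set F} (hS : ∀ t ∈ S, Polynomial.eval t p = 0) :
    S.encard ≤ (m : ℕ∞) := by
  have hsub : S ⊆ ↑p.roots.toFinset := by
    intro t ht
    simp only [Finset.mem_coe, Multiset.mem_toFinset]
    rw [Polynomial.mem_roots hp]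
    exact hS t ht
  calc S.encard ≤ (↑p.roots.toFinset : Set F).encard := Set.encard_mono hsub
    _ = (p.roots.toFinset.card : ℕ∞) := Set.encard_coe_eq_coe_finsetCard _
    _ ≤ (m : ℕ∞) := by
        exact_mod_cast le_trans (le_trans (Multiset.toFinset_card_le _)
          (Polynomial.card_roots' p)) hdeg

lemma encard_root_set_le' {p : Polynomial F} (hp : p ≠ 0) {m : ℕ}
    (hdeg : p.natDegree ≤ m) (A : Finset F) (hA : ∀ x ∈ A, Polynomial.eval x p = 0)
    {S : Set F} (hS : ∀ t ∈ S, Polynomial.eval t p = 0 ∧ t ∉ A) :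
    S.encard ≤ ((m - A.card : ℕ) : ℕ∞) := by
  have hAsub : A ⊆ p.roots.toFinset := by
    intro x hx
    rw [Multiset.mem_toFinset, Polynomial.mem_roots hp]
    exact hA x hx
  have hsub : S ⊆ ↑(p.roots.toFinset \ A) := by
    intro t ht
    simp only [Finset.coe_sdiff, Set.mem_diff, Finset.mem_coe, Multiset.mem_toFinset]
    exact ⟨by rw [Polynomial.mem_roots hp]; exact (hS t ht).1, (hS t ht).2⟩
  calc S.encard ≤ (↑(p.roots.toFinset \ A) : Set F).encard := Set.encard_mono hsub
    _ = ((p.roots.toFinset \ A).card : ℕ∞) := Set.encard_coe_eq_coe_finsetCard _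
    _ ≤ ((m - A.card : ℕ) : ℕ∞) := by
        rw [Finset.card_sdiff_of_subset hAsub]
        have : p.roots.toFinset.card ≤ m := le_trans (le_trans (Multiset.toFinset_card_le _)
          (Polynomial.card_roots' p)) hdeg
        exact_mod_cast Nat.sub_le_sub_right this _

end RootCount

/-- A subset `D ⊆ F^d` is `Q`-generic over `F` if every affine hyperplane of `F^d`
contains at most `d` points of `D`, and every `Q`-quadric contains at most `d+1`
points of `D`. -/
def QGeneric {F : Type*} [Field F] {d : ℕ} (Q : MvPolynomial (Fin d) F)
    (D : Set (Fin d → F)) : Prop :=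
  (∀ f : MvPolynomial (Fin d) F, f.totalDegree = 1 →
    {x ∈ D | MvPolynomial.eval x f = 0}.encard ≤ (d : ℕ∞)) ∧
  (∀ f : MvPolynomial (Fin d) F, f.totalDegree ≤ 1 →
    {x ∈ D | MvPolynomial.eval x (Q + f) = 0}.encard ≤ (d : ℕ∞) + 1)

/-- Let `F` be a field, `d ≥ 2`, and if `F` is finite then `d ≤ |F| + 1`.
Let `Q` be a rich nonzero quadratic form (there is a basis `v₁,…,v_d` of `F^d` with
`Q(v₁) = ⋯ = Q(v_{d-1}) = 0 ≠ Q(v_d)`). Then there is a `Q`-generic subset `C₀ ⊆ F^d`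
with `|C₀| + d = |F| + 1` as cardinals. -/
theorem stmt_6 (F : Type*) [Field F] (d : ℕ) (hd : 2 ≤ d)
    (hcard : ∀ _ : Finite F, d ≤ Nat.card F + 1)
    (Q : MvPolynomial (Fin d) F) (hQ0 : Q ≠ 0) (hQ : Q.IsHomogeneous 2)
    (hrich : ∃ v : Fin d → (Fin d → F),
      LinearIndependent F v ∧ Submodule.span F (Set.range v) = ⊤ ∧
      (∀ i : Fin d, (i : ℕ) < d - 1 → MvPolynomial.eval (v i) Q = 0) ∧
      MvPolynomial.eval (v ⟨d - 1, by omega⟩) Q ≠ 0) :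
    ∃ C₀ : Set (Fin d → F), QGeneric Q C₀ ∧
      Cardinal.mk C₀ + (d : Cardinal) = Cardinal.mk F + 1 := by
  obtain ⟨v, hli, hspan, hzero, hlast⟩ := hrich
  obtain ⟨n, rfl⟩ : ∃ n, d = n + 1 := ⟨d - 1, by omega⟩
  have hn : 1 ≤ n := by omega
  have hzero' : ∀ j : Fin n, MvPolynomial.eval (v j.castSucc) Q = 0 := by
    intro j
    exact hzero j.castSucc (by simpa using j.isLt)
  have hlast' : MvPolynomial.eval (v (Fin.last n)) Q ≠ 0 := hlast
  -- choose n distinct elements of F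
  obtain ⟨a, ha⟩ : ∃ a : Fin n → F, Function.Injective a := by
    rcases finite_or_infinite F with hF | hF
    · have h1 : n ≤ Nat.card F := by have := hcard hF; omega
      haveI := Fintype.ofFinite F
      rw [Nat.card_eq_fintype_card] at h1
      obtain ⟨e⟩ := Function.Embedding.nonempty_of_card_le (by simpa using h1 :
        Fintype.card (Fin n) ≤ Fintype.card F)
      exact ⟨e, e.injective⟩
    · exact ⟨fun j => (Infinite.natEmbedding F) j, fun i j h =>
        Fin.val_injective ((Infinite.natEmbedding F).injective h)⟩
  classical
  -- main definitions
  set π : Polynomial F := ∏ j : Fin n, (X - C (a j)) with hπdef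
  set πe : Fin n → Polynomial F := fun j => ∏ k ∈ Finset.univ.erase j, (X - C (a k)) with hπedef
  set γ : F → (Fin (n + 1) → F) :=
    fun t k => (∑ j : Fin n, (t - a j)⁻¹ * v j.castSucc k) + t * v (Fin.last n) k with hγdef
  set T : Set F := {t | ∀ j, t ≠ a j} with hTdef
  set N : Fin (n + 1) → Polynomial F :=
    fun k => (∑ j : Fin n, C (v j.castSucc k) * πe j) + C (v (Fin.last n) k) * (X * π)
    with hNdef
  -- basic polynomial facts
  have hπmonic : π.Monic := monic_prod_of_monic _ _ fun j _ => monic_X_sub_C _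
  have hπdeg : π.natDegree = n := by
    rw [hπdef, natDegree_prod_of_monic _ _ (fun j _ => monic_X_sub_C _)]
    simp
  have hπfac : ∀ j, π = (X - C (a j)) * πe j :=
    fun j => (Finset.mul_prod_erase _ _ (Finset.mem_univ j)).symm
  have hπedeg : ∀ j, (πe j).natDegree ≤ n - 1 := by
    intro j
    rw [hπedef, natDegree_prod_of_monic _ _ (fun k _ => monic_X_sub_C _)]
    simp [Finset.card_erase_of_mem]
  have hπT : ∀ t ∈ T, π.eval t ≠ 0 := by
    intro t ht
    rw [hπdef, eval_prod]
    rw [Finset.prod_ne_zero_iff]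
    intro j _
    simp only [eval_sub, eval_X, eval_C]
    exact sub_ne_zero.mpr (ht j)
  have hπa : ∀ j, π.eval (a j) = 0 := by
    intro j
    rw [hπfac j]
    simp
  have hπea : ∀ j, (πe j).eval (a j) ≠ 0 := by
    intro j
    rw [hπedef, eval_prod, Finset.prod_ne_zero_iff]
    intro k hk
    simp only [eval_sub, eval_X, eval_C]
    exact sub_ne_zero.mpr fun h => (Finset.mem_erase.mp hk).1 (ha h).symm
  have hπea' : ∀ j j', j' ≠ j → (πe j).eval (a j') = 0 := by
    intro j j' hne
    rw [hπedef, eval_prod]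
    apply Finset.prod_eq_zero (Finset.mem_erase.mpr ⟨hne, Finset.mem_univ j'⟩)
    simp
  have hπeT : ∀ t ∈ T, ∀ j, (πe j).eval t = π.eval t * (t - a j)⁻¹ := by
    intro t ht j
    have h1 : π.eval t = (t - a j) * (πe j).eval t := by
      conv_lhs => rw [hπfac j]
      simp
    rw [h1]
    field_simp [sub_ne_zero.mpr (ht j)]
  -- N facts
  have hNT : ∀ t ∈ T, ∀ k, (N k).eval t = π.eval t * γ t k := by
    intro t ht k
    rw [hNdef]
    simp only [eval_add, eval_finset_sum, eval_mul, eval_C, eval_X]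
    rw [hγdef]
    simp only []
    rw [mul_add, Finset.mul_sum]
    congr 1
    · apply Finset.sum_congr rfl
      intro j _
      rw [hπeT t ht j]
      ring
    · ring
  have hNdeg : ∀ k, (N k).natDegree ≤ n + 1 := by
    intro k
    rw [hNdef]
    refine le_trans (natDegree_add_le _ _) ?_
    simp only [max_le_iff]
    constructor
    · apply Polynomial.natDegree_sum_le_of_forall_le
      intro j _
      refine le_trans natDegree_mul_le ?_
      have := hπedeg j
      simp only [natDegree_C]
      omega
    · refine le_trans natDegree_mul_le ?_
      have : (X * π).natDegree ≤ 1 + n := le_trans natDegree_mul_le (by simp [hπdeg])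
      simp only [natDegree_C]
      omega
  have hNcoeff : ∀ k, (N k).coeff (n + 1) = v (Fin.last n) k := by
    intro k
    rw [hNdef]
    simp only [coeff_add, finset_sum_coeff, coeff_C_mul]
    have h1 : ∀ j : Fin n, (πe j).coeff (n + 1) = 0 := by
      intro j
      apply coeff_eq_zero_of_natDegree_lt
      have := hπedeg j
      omega
    rw [Finset.sum_eq_zero (fun j _ => by rw [h1 j, mul_zero])]
    have h2 : (X * π).coeff (n + 1) = 1 := by
      rw [mul_comm, coeff_mul_X]
      have := hπmonic.coeff_natDegree
      rw [hπdeg] at this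
      exact this
    rw [h2]
    ring
  have hNa : ∀ j k, (N k).eval (a j) = (πe j).eval (a j) * v j.castSucc k := by
    intro j k
    rw [hNdef]
    simp only [eval_add, eval_finset_sum, eval_mul, eval_C, eval_X]
    rw [Finset.sum_eq_single j
      (fun j' _ hne => by rw [hπea' j' j (Ne.symm hne)]; ring)
      (fun h => absurd (Finset.mem_univ j) h)]
    rw [hπa j]
    ring
  -- injectivity of γ on T
  have hγinj : Set.InjOn γ T := by
    intro t ht t' ht' htt
    set g : Fin (n + 1) → F :=
      fun i => Fin.lastCases (t - t') (fun j => (t - a j)⁻¹ - (t' - a j)⁻¹) i with hgdef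
    have hsum : ∑ i, g i • v i = 0 := by
      funext k
      simp only [Finset.sum_apply, Pi.smul_apply, smul_eq_mul, Pi.zero_apply]
      rw [Fin.sum_univ_castSucc]
      simp only [hgdef, Fin.lastCases_castSucc, Fin.lastCases_last]
      have h1 : γ t k = γ t' k := by rw [htt]
      simp only [hγdef] at h1
      have hsplit : ∑ j : Fin n, ((t - a j)⁻¹ - (t' - a j)⁻¹) * v j.castSucc k =
          (∑ j : Fin n, (t - a j)⁻¹ * v j.castSucc k) -
            ∑ j : Fin n, (t' - a j)⁻¹ * v j.castSucc k := by
        rw [← Finset.sum_sub_distrib]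
        exact Finset.sum_congr rfl (fun j _ => by ring)
      rw [hsplit, sub_mul]
      linear_combination h1
    have := linearIndependent_iff'.mp hli Finset.univ g
      (by simpa using hsum) (Fin.last n) (Finset.mem_univ _)
    simpa [hgdef, sub_eq_zero] using this
  set C₀ : Set (Fin (n + 1) → F) := γ '' T with hC₀def
  have himg : ∀ P : (Fin (n + 1) → F) → Prop,
      {x ∈ C₀ | P x} = γ '' {t ∈ T | P (γ t)} := by
    intro P
    ext x
    constructor
    · rintro ⟨⟨t, ht, rfl⟩, hP⟩
      exact ⟨t, ⟨ht, hP⟩, rfl⟩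
    · rintro ⟨t, ⟨ht, hP⟩, rfl⟩
      exact ⟨⟨t, ht, rfl⟩, hP⟩
  -- the common analysis for an affine polynomial f
  have key : ∀ f : MvPolynomial (Fin (n + 1)) F, f.totalDegree ≤ 1 →
      ∃ qf : Polynomial F, qf.natDegree ≤ n + 1 ∧
        (∀ t ∈ T, qf.eval t = π.eval t * MvPolynomial.eval (γ t) f) ∧
        (qf.coeff (n + 1) = ∑ k, MvPolynomial.coeff (Finsupp.single k 1) f * v (Fin.last n) k) ∧
        (∀ j : Fin n, qf.eval (a j) =
          (πe j).eval (a j) * ∑ k, MvPolynomial.coeff (Finsupp.single k 1) f * v j.castSucc k) :=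
    by
    intro f hf
    set c₀ := MvPolynomial.coeff 0 f with hc₀
    set b : Fin (n + 1) → F := fun k => MvPolynomial.coeff (Finsupp.single k 1) f with hb
    refine ⟨C c₀ * π + ∑ k, C (b k) * N k, ?_, ?_, ?_, ?_⟩
    · refine le_trans (natDegree_add_le _ _) ?_
      simp only [max_le_iff]
      constructor
      · refine le_trans natDegree_mul_le ?_
        simp only [natDegree_C, hπdeg]
        omega
      · apply Polynomial.natDegree_sum_le_of_forall_le
        intro k _
        refine le_trans natDegree_mul_le ?_
        have := hNdeg k
        simp only [natDegree_C]
        omega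
    · intro t ht
      rw [eval_totalDegree_le_one hf (γ t)]
      simp only [eval_add, eval_finset_sum, eval_mul, eval_C]
      rw [mul_add]
      congr 1
      · ring
      · rw [Finset.mul_sum]
        apply Finset.sum_congr rfl
        intro k _
        rw [hNT t ht k]
        ring
    · simp only [coeff_add, finset_sum_coeff, coeff_C_mul]
      have h1 : π.coeff (n + 1) = 0 := coeff_eq_zero_of_natDegree_lt (by omega)
      rw [h1, mul_zero, zero_add]
      apply Finset.sum_congr rfl
      intro k _
      rw [hNcoeff k]
    · intro j
      simp only [eval_add, eval_finset_sum, eval_mul, eval_C]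
      rw [hπa j, mul_zero, zero_add, Finset.mul_sum]
      apply Finset.sum_congr rfl
      intro k _
      rw [hNa j k]
      ring
  refine ⟨C₀, ⟨?_, ?_⟩, ?_⟩
  · -- hyperplanes
    intro f hf
    obtain ⟨qf, hqdeg, hqT, hqcoeff, hqa⟩ := key f (le_of_eq hf)
    set b : Fin (n + 1) → F := fun k => MvPolynomial.coeff (Finsupp.single k 1) f with hb
    set L : Fin (n + 1) → F := fun i => ∑ k, b k * v i k with hL
    -- qf ≠ 0
    have hLne : ∃ i, L i ≠ 0 := by
      by_contra hc
      push_neg at hc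
      obtain ⟨k₀, hk₀⟩ := exists_single_coeff_ne_zero hf
      apply hk₀
      set φ : (Fin (n + 1) → F) →ₗ[F] F := ∑ k, b k • LinearMap.proj k with hφ
      have hφv : ∀ i, φ (v i) = 0 := by
        intro i
        have := hc i
        rw [hL] at this
        simpa [hφ, LinearMap.sum_apply, mul_comm] using this
      have hker : Submodule.span F (Set.range v) ≤ LinearMap.ker φ := by
        rw [Submodule.span_le]
        rintro _ ⟨i, rfl⟩
        exact LinearMap.mem_ker.mpr (hφv i)
      rw [hspan] at hker
      have h0 : φ (Pi.single k₀ 1) = 0 :=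
        LinearMap.mem_ker.mp (hker (Submodule.mem_top))
      rw [hφ] at h0
      simp only [LinearMap.sum_apply, LinearMap.smul_apply, LinearMap.proj_apply,
        smul_eq_mul] at h0
      rw [Finset.sum_eq_single k₀ (fun k _ hk => by simp [Pi.single_eq_of_ne hk])
        (fun h => absurd (Finset.mem_univ k₀) h)] at h0
      simpa using h0
    have hqne : qf ≠ 0 := by
      obtain ⟨i, hi⟩ := hLne
      induction i using Fin.lastCases with
      | last =>
        intro h0
        apply hi
        have := hqcoeff
        rw [h0] at this
        simp only [coeff_zero] at this
        rw [hL]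
        simp only [hb]
        exact this.symm
      | cast j =>
        intro h0
        apply hi
        have := hqa j
        rw [h0] at this
        simp only [eval_zero] at this
        have h2 : (∑ k, b k * v j.castSucc k) = 0 := by
          rcases mul_eq_zero.mp this.symm with h | h
          · exact absurd h (hπea j)
          · exact h
        rw [hL]
        exact h2
    -- count roots
    rw [himg]
    rw [Set.InjOn.encard_image (hγinj.mono (fun t ht => ht.1))]
    have : ((n + 1 : ℕ) : ℕ∞) = ((n : ℕ∞) + 1) := by push_cast; ring
    rw [show ((n : ℕ) + 1 : ℕ∞) = (((n + 1 : ℕ)) : ℕ∞) by push_cast; ring] at *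
    refine le_trans (encard_root_set_le hqne hqdeg ?_) (le_refl _)
    intro t ht
    rw [hqT t ht.1, ht.2, mul_zero]
  · -- quadrics
    intro f hf
    obtain ⟨qf, hqdeg, hqT, hqcoeff, hqa⟩ := key f hf
    set p : Polynomial F := MvPolynomial.aeval N Q + π * qf with hp
    have hpT : ∀ t ∈ T, p.eval t = (π.eval t) ^ 2 * MvPolynomial.eval (γ t) (Q + f) := by
      intro t ht
      rw [hp]
      simp only [eval_add, eval_mul]
      rw [polyeval_aeval]
      have hfun : (fun k => (N k).eval t) = fun k => π.eval t * γ t k := by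
        funext k
        exact hNT t ht k
      rw [hfun, eval_smul_two hQ, hqT t ht, map_add]
      ring
    have hpcoeff : p.coeff (2 * (n + 1)) = MvPolynomial.eval (v (Fin.last n)) Q := by
      rw [hp]
      simp only [coeff_add]
      have h1 : (π * qf).coeff (2 * (n + 1)) = 0 := by
        apply coeff_eq_zero_of_natDegree_lt
        refine lt_of_le_of_lt natDegree_mul_le ?_
        rw [hπdeg]
        omega
      rw [h1, add_zero, coeff_top_aeval N hNdeg hQ]
      have h2 : (fun k => (N k).coeff (n + 1)) = v (Fin.last n) := funext hNcoeff
      rw [h2]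
    have hpne : p ≠ 0 := by
      intro h0
      apply hlast'
      rw [← hpcoeff, h0, coeff_zero]
    have hpdeg : p.natDegree ≤ 2 * (n + 1) := by
      rw [hp]
      refine le_trans (natDegree_add_le _ _) ?_
      simp only [max_le_iff]
      refine ⟨natDegree_aeval_le N hNdeg hQ, ?_⟩
      refine le_trans natDegree_mul_le ?_
      rw [hπdeg]
      omega
    have hpa : ∀ j : Fin n, p.eval (a j) = 0 := by
      intro j
      rw [hp]
      simp only [eval_add, eval_mul]
      rw [hπa j, zero_mul, add_zero, polyeval_aeval]
      have hfun : (fun k => (N k).eval (a j)) = fun k => (πe j).eval (a j) * v j.castSucc k := by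
        funext k
        exact hNa j k
      rw [hfun, eval_smul_two hQ, hzero' j, mul_zero]
    rw [himg]
    rw [Set.InjOn.encard_image (hγinj.mono (fun t ht => ht.1))]
    have hAcard : (Finset.univ.image a).card = n := by
      rw [Finset.card_image_of_injective _ ha]
      simp
    have := encard_root_set_le' hpne hpdeg (Finset.univ.image a)
      (by
        intro x hx
        obtain ⟨j, _, rfl⟩ := Finset.mem_image.mp hx
        exact hpa j)
      (S := {t ∈ T | MvPolynomial.eval (γ t) (Q + f) = 0})
      (by
        intro t ht
        constructor
        · rw [hpT t ht.1, ht.2, mul_zero]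
        · intro hmem
          obtain ⟨j, _, rfl⟩ := Finset.mem_image.mp hmem
          exact (ht.1 j) rfl)
    refine le_trans this ?_
    rw [hAcard]
    have : (2 * (n + 1) - n : ℕ) = n + 2 := by omega
    rw [this]
    push_cast
    ring_nf
    rfl
  · -- cardinality
    have hTeq : T = (Set.range a)ᶜ := by
      ext t
      simp only [hTdef, Set.mem_setOf_eq, Set.mem_compl_iff, Set.mem_range, not_exists]
      exact ⟨fun h j hj => h j hj.symm, fun h j hj => h j hj.symm⟩
    have h1 : Cardinal.mk C₀ = Cardinal.mk T := Cardinal.mk_image_eq_of_injOn γ T hγinj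
    have h2 : Cardinal.mk (Set.range a) + Cardinal.mk T = Cardinal.mk F := by
      rw [hTeq]
      rw [Cardinal.mk_sum_compl]
    have h3 : Cardinal.mk (Set.range a) = n := by
      have hset : Set.range a = ↑(Finset.univ.image a) := by ext x; simp
      rw [hset]
      simp only [Finset.coe_sort_coe]
      rw [Cardinal.mk_coe_finset, Finset.card_image_of_injective _ ha,
        Finset.card_univ, Fintype.card_fin]
    rw [h1]
    have : ((n + 1 : ℕ) : Cardinal) = (n : Cardinal) + 1 := by push_cast; ring
    rw [this, ← add_assoc]
    congr 1
    rw [add_comm (Cardinal.mk T) (n : Cardinal), ← h3]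
    exact h2
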